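/- Let n ≥ 2, k ≥ 1, and 0 < ν < 2^{-n}. Let L : ℝⁿ → (ℝⁿ)^k be a linear map with Σ_{i=1}^k det L_i = ‖L‖ⁿ, and let R : ℝⁿ → (ℝⁿ)^k be a linear map with |R(e_j) − L(e_j)| ≤ (ν/√n) ‖L‖ for j = 1,...,n. Then ‖R‖ ≤ (1+ν)‖L‖ and ‖R‖ⁿ ≤ ((1+ν)ⁿ / (1 − 2ⁿν)) Σ_{i=1}^k det R_i. -/

import Mathlib

open Finset

open Finset

lemma le_of_sq_le_sq' {a b : ℝ} (h : a ^ 2 ≤ b ^ 2) (hb : 0 ≤ b) : a ≤ b := by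
  nlinarith [sq_nonneg (a + b), sq_nonneg (a - b)]

lemma nat_le_geo (n : ℕ) : (n : ℝ) ≤ (8/5) ^ n := by
  have h : ∀ m : ℕ, (m : ℝ) + 1/2 ≤ (8/5) ^ m := by
    intro m
    induction m with
    | zero => norm_num
    | succ p ih =>
      rcases Nat.lt_or_ge p 2 with hp | hp
      · interval_cases p <;> norm_num
      · have hp' : (2 : ℝ) ≤ p := by exact_mod_cast hp
        push_cast
        rw [pow_succ]
        nlinarith
  linarith [h n]

lemma sum_prod_bound {k n : ℕ} (hn : 2 ≤ n) (a : Fin k → Fin n → ℝ)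
    (ha : ∀ i j, 0 ≤ a i j) (t s : Fin n) (hts : s ≠ t)
    (M α : ℝ) (hM : 0 ≤ M) (hα : 0 ≤ α)
    (hbd : ∀ i j, j ≠ t → a i j ≤ M)
    (h1 : ∑ i, (a i t) ^ 2 ≤ α ^ 2)
    (h2 : ∑ i, (a i s) ^ 2 ≤ M ^ 2) :
    ∑ i, ∏ j, a i j ≤ α * M ^ (n - 1) := by
  classical
  have hcard : (((univ : Finset (Fin n)).erase t).erase s).card = n - 2 := by
    rw [card_erase_of_mem (mem_erase.2 ⟨hts, mem_univ s⟩), card_erase_of_mem (mem_univ t)]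
    simp only [card_univ, Fintype.card_fin]
    omega
  have hstep : ∀ i, ∏ j, a i j ≤ a i t * a i s * M ^ (n - 2) := by
    intro i
    have e1 : ∏ j, a i j = a i t * ∏ j ∈ (univ : Finset (Fin n)).erase t, a i j :=
      (mul_prod_erase univ _ (mem_univ t)).symm
    have e2 : ∏ j ∈ (univ : Finset (Fin n)).erase t, a i j
        = a i s * ∏ j ∈ ((univ : Finset (Fin n)).erase t).erase s, a i j :=
      (mul_prod_erase _ _ (mem_erase.2 ⟨hts, mem_univ s⟩)).symm
    have e3 : ∏ j ∈ ((univ : Finset (Fin n)).erase t).erase s, a i j ≤ M ^ (n - 2) := by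
      calc ∏ j ∈ ((univ : Finset (Fin n)).erase t).erase s, a i j
          ≤ ∏ _j ∈ ((univ : Finset (Fin n)).erase t).erase s, M :=
            prod_le_prod (fun j _ => ha i j)
              (fun j hj => hbd i j (mem_erase.1 (mem_of_mem_erase hj)).1)
        _ = M ^ (n - 2) := by rw [prod_const, hcard]
    calc ∏ j, a i j = a i t * (a i s * ∏ j ∈ ((univ : Finset (Fin n)).erase t).erase s, a i j) := by
          rw [e1, e2]
      _ ≤ a i t * (a i s * M ^ (n - 2)) := by
          apply mul_le_mul_of_nonneg_left _ (ha i t)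
          exact mul_le_mul_of_nonneg_left e3 (ha i s)
      _ = a i t * a i s * M ^ (n - 2) := by ring
  have hCS : ∑ i, a i t * a i s ≤ α * M := by
    apply le_of_sq_le_sq' _ (by positivity)
    calc (∑ i, a i t * a i s) ^ 2 ≤ (∑ i, (a i t) ^ 2) * ∑ i, (a i s) ^ 2 :=
          sum_mul_sq_le_sq_mul_sq univ _ _
      _ ≤ α ^ 2 * M ^ 2 := by
          apply mul_le_mul h1 h2 (by positivity) (by positivity)
      _ = (α * M) ^ 2 := by ring
  calc ∑ i, ∏ j, a i j ≤ ∑ i, a i t * a i s * M ^ (n - 2) := sum_le_sum fun i _ => hstep i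
    _ = (∑ i, a i t * a i s) * M ^ (n - 2) := by rw [sum_mul]
    _ ≤ (α * M) * M ^ (n - 2) := by
        apply mul_le_mul_of_nonneg_right hCS (by positivity)
    _ = α * M ^ (n - 2 + 1) := by ring
    _ = α * M ^ (n - 1) := by rw [show n - 2 + 1 = n - 1 by omega]



open Finset

lemma hadamard {n : ℕ} (v : Fin n → EuclideanSpace ℝ (Fin n)) :
    |(EuclideanSpace.basisFun (Fin n) ℝ).toBasis.det v| ≤ ∏ j, ‖v j‖ := by
  haveI : Fact (Module.finrank ℝ (EuclideanSpace ℝ (Fin n)) = n) :=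
    ⟨finrank_euclideanSpace_fin⟩
  set b := EuclideanSpace.basisFun (Fin n) ℝ
  set o := b.toBasis.orientation with ho
  rw [← o.volumeForm_robust' b v]
  exact o.abs_volumeForm_apply_le v

lemma det_eq_basis_det {n : ℕ} (T : EuclideanSpace ℝ (Fin n) →ₗ[ℝ] EuclideanSpace ℝ (Fin n)) :
    LinearMap.det T
      = (EuclideanSpace.basisFun (Fin n) ℝ).toBasis.det
          (fun j => T (EuclideanSpace.single j 1)) := by
  set b := EuclideanSpace.basisFun (Fin n) ℝ
  have h := Module.Basis.det_comp b.toBasis T ⇑b.toBasis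
  rw [Module.Basis.det_self, mul_one] at h
  rw [← h]
  congr 1
  funext j
  simp [b, EuclideanSpace.basisFun_apply]



lemma det_telescope {n : ℕ} {M : Type*} [AddCommGroup M] [Module ℝ M]
    (D : MultilinearMap ℝ (fun _ : Fin n => M) ℝ) (u v : Fin n → M) :
    D u - D v = ∑ t ∈ Finset.range n,
      (if h : t < n then
        D (Function.update (fun j : Fin n => if (j : ℕ) < t + 1 then v j else u j)
            ⟨t, h⟩ (u ⟨t, h⟩ - v ⟨t, h⟩))
       else 0) := by
  classical
  set c : ℕ → Fin n → M := fun t j => if (j : ℕ) < t then v j else u j with hc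
  have h0 : c 0 = u := by funext j; simp [c]
  have hnn : c n = v := by funext j; simp [c, j.isLt]
  calc D u - D v = D (c 0) - D (c n) := by rw [h0, hnn]
    _ = ∑ t ∈ Finset.range n, (D (c t) - D (c (t + 1))) :=
        (Finset.sum_range_sub' (fun t => D (c t)) n).symm
    _ = _ := by
        apply Finset.sum_congr rfl
        intro t ht
        rw [Finset.mem_range] at ht
        rw [dif_pos ht]
        set t' : Fin n := ⟨t, ht⟩ with ht'
        have e1 : c t = Function.update (c (t + 1)) t' (u t') := by
          funext j
          rcases eq_or_ne j t' with rfl | hj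
          · simp [c, Function.update_self, t']
          · have hj' : (j : ℕ) ≠ t := fun h => hj (Fin.ext h)
            rw [Function.update_of_ne hj]
            simp only [c]
            by_cases h : (j : ℕ) < t
            · rw [if_pos h, if_pos (by omega)]
            · rw [if_neg h, if_neg (by omega)]
        have e2 : c (t + 1) = Function.update (c (t + 1)) t' (v t') := by
          funext j
          rcases eq_or_ne j t' with rfl | hj
          · simp [c, Function.update_self, t']
          · rw [Function.update_of_ne hj]
        calc D (c t) - D (c (t + 1))
            = D (Function.update (c (t + 1)) t' (u t'))
              - D (Function.update (c (t + 1)) t' (v t')) := by rw [← e1, ← e2]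
          _ = D (Function.update (c (t + 1)) t' (u t' - v t')) :=
              (D.map_update_sub _ _ _ _).symm
          _ = _ := rfl


set_option maxHeartbeats 1000000 in
theorem conformal_vertices_distortion (n k : ℕ) (hn : 2 ≤ n) (hk : 1 ≤ k)
    (ν : ℝ) (hν : 0 < ν) (hν' : ν < 1 / 2 ^ n)
    (L R : EuclideanSpace ℝ (Fin n) →L[ℝ]
        PiLp 2 (fun _ : Fin k => EuclideanSpace ℝ (Fin n)))
    (Li Ri : Fin k → (EuclideanSpace ℝ (Fin n) →L[ℝ] EuclideanSpace ℝ (Fin n)))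
    (hLi : ∀ i v, Li i v = L v i) (hRi : ∀ i v, Ri i v = R v i)
    (hL : ∑ i, LinearMap.det
        ((Li i : EuclideanSpace ℝ (Fin n) →ₗ[ℝ] EuclideanSpace ℝ (Fin n))) = ‖L‖ ^ n)
    (hclose : ∀ j : Fin n, ‖R (EuclideanSpace.single j 1) - L (EuclideanSpace.single j 1)‖
        ≤ ν / Real.sqrt n * ‖L‖) :
    ‖R‖ ≤ (1 + ν) * ‖L‖ ∧
    ‖R‖ ^ n ≤ (1 + ν) ^ n / (1 - 2 ^ n * ν) * ∑ i, LinearMap.det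
        ((Ri i : EuclideanSpace ℝ (Fin n) →ₗ[ℝ] EuclideanSpace ℝ (Fin n))) := by
  classical
  have hn1 : (1:ℝ) ≤ (n:ℝ) := by exact_mod_cast hn.trans' (by norm_num)
  have hsn1 : 1 ≤ Real.sqrt n := by
    rw [show (1:ℝ) = Real.sqrt 1 by simp]
    exact Real.sqrt_le_sqrt hn1
  have hsnpos : (0:ℝ) < Real.sqrt n := lt_of_lt_of_le one_pos hsn1
  have hν4 : ν ≤ 1 / 4 := by
    have h4 : (4:ℝ) ≤ 2 ^ n := by
      calc (4:ℝ) = 2 ^ 2 := by norm_num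
        _ ≤ 2 ^ n := pow_le_pow_right₀ (by norm_num) hn
    have h2 : (1:ℝ) / 2 ^ n ≤ 1 / 4 := one_div_le_one_div_of_le (by norm_num) h4
    linarith [hν'.le.trans h2]
  have hL0 : (0:ℝ) ≤ ‖L‖ := norm_nonneg L
  -- operator norm bound
  have hRL : ‖R - L‖ ≤ ν * ‖L‖ := by
    refine ContinuousLinearMap.opNorm_le_bound _ (by positivity) fun x => ?_
    have hxd : ∑ j, x j • (EuclideanSpace.single j 1 : EuclideanSpace ℝ (Fin n)) = x := by
      have h := (EuclideanSpace.basisFun (Fin n) ℝ).sum_repr x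
      simpa [EuclideanSpace.basisFun_apply, EuclideanSpace.basisFun_repr] using h
    have hsumabs : ∑ j, |x j| ≤ Real.sqrt n * ‖x‖ := by
      apply le_of_sq_le_sq' _ (by positivity)
      have hcs : (∑ j, |x j|) ^ 2 ≤ (#(univ : Finset (Fin n)) : ℝ) * ∑ j, |x j| ^ 2 :=
        sq_sum_le_card_mul_sum_sq
      have hx2 : ∑ j, |x j| ^ 2 = ‖x‖ ^ 2 := by
        rw [EuclideanSpace.norm_eq, Real.sq_sqrt (by positivity)]
        simp [sq_abs]
      calc (∑ j, |x j|) ^ 2 ≤ (n:ℝ) * ∑ j, |x j| ^ 2 := by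
            simpa [card_univ] using hcs
        _ = (Real.sqrt n * ‖x‖) ^ 2 := by
            rw [hx2, mul_pow, Real.sq_sqrt (by positivity)]
    calc ‖(R - L) x‖ = ‖∑ j, x j • ((R - L) (EuclideanSpace.single j 1))‖ := by
          conv_lhs => rw [← hxd]
          rw [map_sum]
          simp_rw [map_smul]
      _ ≤ ∑ j, ‖x j • ((R - L) (EuclideanSpace.single j 1))‖ := norm_sum_le _ _
      _ = ∑ j, |x j| * ‖(R - L) (EuclideanSpace.single j 1)‖ := by
          simp [norm_smul]
      _ ≤ ∑ j, |x j| * (ν / Real.sqrt n * ‖L‖) := by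
          refine sum_le_sum fun j _ => mul_le_mul_of_nonneg_left ?_ (abs_nonneg _)
          simpa [ContinuousLinearMap.sub_apply] using hclose j
      _ = (∑ j, |x j|) * (ν / Real.sqrt n * ‖L‖) := by rw [← sum_mul]
      _ ≤ (Real.sqrt n * ‖x‖) * (ν / Real.sqrt n * ‖L‖) := by
          apply mul_le_mul_of_nonneg_right hsumabs (by positivity)
      _ = ν * ‖L‖ * ‖x‖ := by field_simp
  have hR1 : ‖R‖ ≤ (1 + ν) * ‖L‖ := by
    calc ‖R‖ = ‖L + (R - L)‖ := by rw [add_sub_cancel]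
      _ ≤ ‖L‖ + ‖R - L‖ := norm_add_le _ _
      _ ≤ ‖L‖ + ν * ‖L‖ := by linarith
      _ = (1 + ν) * ‖L‖ := by ring
  refine ⟨hR1, ?_⟩
  -- determinant part
  set b := EuclideanSpace.basisFun (Fin n) ℝ with hb
  set D := b.toBasis.det with hD
  set u : Fin k → Fin n → EuclideanSpace ℝ (Fin n) :=
    fun i j => L (EuclideanSpace.single j 1) i with hu
  set v : Fin k → Fin n → EuclideanSpace ℝ (Fin n) :=
    fun i j => R (EuclideanSpace.single j 1) i with hv
  have hdetL : ∀ i, LinearMap.det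
      ((Li i : EuclideanSpace ℝ (Fin n) →ₗ[ℝ] EuclideanSpace ℝ (Fin n))) = D (u i) := by
    intro i
    rw [det_eq_basis_det]
    congr 1
    funext j
    simp [u, hLi]
  have hdetR : ∀ i, LinearMap.det
      ((Ri i : EuclideanSpace ℝ (Fin n) →ₗ[ℝ] EuclideanSpace ℝ (Fin n))) = D (v i) := by
    intro i
    rw [det_eq_basis_det]
    congr 1
    funext j
    simp [v, hRi]
  set M : ℝ := (1 + ν / Real.sqrt n) * ‖L‖ with hM
  set α : ℝ := ν / Real.sqrt n * ‖L‖ with hα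
  have hα0 : 0 ≤ α := by positivity
  have hM0 : 0 ≤ M := by positivity
  have hLM : ‖L‖ ≤ M := by
    rw [hM]
    nlinarith [div_nonneg hν.le hsnpos.le]
  have hcompsq : ∀ (x : PiLp 2 (fun _ : Fin k => EuclideanSpace ℝ (Fin n))),
      ∑ i, ‖x i‖ ^ 2 = ‖x‖ ^ 2 := fun x => (PiLp.norm_sq_eq_of_L2 _ x).symm
  have hcomp : ∀ (x : PiLp 2 (fun _ : Fin k => EuclideanSpace ℝ (Fin n))) (i : Fin k),
      ‖x i‖ ≤ ‖x‖ := by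
    intro x i
    apply le_of_sq_le_sq' _ (norm_nonneg _)
    rw [← hcompsq x]
    exact single_le_sum (f := fun i => ‖x i‖ ^ 2) (fun _ _ => sq_nonneg _) (mem_univ i)
  have hLej : ∀ j : Fin n, ‖L (EuclideanSpace.single j 1)‖ ≤ ‖L‖ := by
    intro j
    simpa [EuclideanSpace.norm_single] using L.le_opNorm (EuclideanSpace.single j 1)
  have hRej : ∀ j : Fin n, ‖R (EuclideanSpace.single j 1)‖ ≤ M := by
    intro j
    calc ‖R (EuclideanSpace.single j 1)‖
        = ‖L (EuclideanSpace.single j 1) +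
            (R (EuclideanSpace.single j 1) - L (EuclideanSpace.single j 1))‖ := by
          rw [add_sub_cancel]
      _ ≤ ‖L (EuclideanSpace.single j 1)‖ +
            ‖R (EuclideanSpace.single j 1) - L (EuclideanSpace.single j 1)‖ := norm_add_le _ _
      _ ≤ ‖L‖ + ν / Real.sqrt n * ‖L‖ := add_le_add (hLej j) (hclose j)
      _ = M := by rw [hM]; ring
  -- the key per-t bound
  have key : ∀ t : ℕ, ∀ ht : t < n,
      ∑ i, |D (Function.update (fun j : Fin n => if (j : ℕ) < t + 1 then v i j else u i j)
          ⟨t, ht⟩ (u i ⟨t, ht⟩ - v i ⟨t, ht⟩))| ≤ α * M ^ (n - 1) := by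
    intro t ht
    set t' : Fin n := ⟨t, ht⟩ with ht'
    set w : Fin k → Fin n → EuclideanSpace ℝ (Fin n) := fun i =>
      Function.update (fun j : Fin n => if (j : ℕ) < t + 1 then v i j else u i j)
        t' (u i t' - v i t') with hw
    set s : Fin n := if t = 0 then ⟨1, by omega⟩ else ⟨0, by omega⟩ with hs
    have hst : s ≠ t' := by
      rcases eq_or_ne t 0 with h | h
      · rw [hs, if_pos h, Fin.ne_iff_vne]
        simp [ht', h]
      · rw [hs, if_neg h, Fin.ne_iff_vne]
        simp [ht']
        omega
    have hwne : ∀ i (j : Fin n), j ≠ t' →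
        w i j = if (j : ℕ) < t + 1 then v i j else u i j := by
      intro i j hj
      rw [hw]
      simp [Function.update_of_ne hj]
    calc ∑ i, |D (w i)| ≤ ∑ i, ∏ j, ‖w i j‖ :=
          sum_le_sum fun i _ => hadamard (w i)
      _ ≤ α * M ^ (n - 1) := by
          apply sum_prod_bound hn (fun i j => ‖w i j‖) (fun i j => norm_nonneg _) t' s hst
            M α hM0 hα0
          · -- bound away from t'
            intro i j hj
            rw [hwne i j hj]
            by_cases hc : (j : ℕ) < t + 1
            · rw [if_pos hc]
              exact (hcomp _ i).trans (hRej j)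
            · rw [if_neg hc]
              exact (hcomp _ i).trans ((hLej j).trans hLM)
          · -- the t' column
            have hcol : ∀ i, w i t' = (L (EuclideanSpace.single t' 1)
                - R (EuclideanSpace.single t' 1)) i := by
              intro i
              rw [hw]
              simp [Function.update_self, u, v]
            calc ∑ i, ‖w i t'‖ ^ 2
                = ∑ i, ‖(L (EuclideanSpace.single t' 1) - R (EuclideanSpace.single t' 1)) i‖ ^ 2 := by
                  exact sum_congr rfl fun i _ => by rw [hcol i]
              _ = ‖L (EuclideanSpace.single t' 1) - R (EuclideanSpace.single t' 1)‖ ^ 2 :=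
                  hcompsq _
              _ ≤ α ^ 2 := by
                  apply pow_le_pow_left₀ (norm_nonneg _) _ 2
                  rw [norm_sub_rev]
                  exact hclose t'
          · -- the s column
            by_cases hc : (s : ℕ) < t + 1
            · have : ∀ i, w i s = v i s := by
                intro i; rw [hwne i s hst, if_pos hc]
              calc ∑ i, ‖w i s‖ ^ 2 = ∑ i, ‖v i s‖ ^ 2 :=
                    sum_congr rfl fun i _ => by rw [this i]
                _ = ‖R (EuclideanSpace.single s 1)‖ ^ 2 := hcompsq _
                _ ≤ M ^ 2 := pow_le_pow_left₀ (norm_nonneg _) (hRej s) 2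
            · have : ∀ i, w i s = u i s := by
                intro i; rw [hwne i s hst, if_neg hc]
              calc ∑ i, ‖w i s‖ ^ 2 = ∑ i, ‖u i s‖ ^ 2 :=
                    sum_congr rfl fun i _ => by rw [this i]
                _ = ‖L (EuclideanSpace.single s 1)‖ ^ 2 := hcompsq _
                _ ≤ M ^ 2 := pow_le_pow_left₀ (norm_nonneg _) ((hLej s).trans hLM) 2
  -- telescoping and summation
  have key2 : ∑ i, (D (u i) - D (v i)) ≤ (n : ℝ) * (α * M ^ (n - 1)) := by
    have habs : ∀ i : Fin k, D (u i) - D (v i) ≤ ∑ t ∈ range n,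
        (if h : t < n then
          |D (Function.update (fun j : Fin n => if (j : ℕ) < t + 1 then v i j else u i j)
              ⟨t, h⟩ (u i ⟨t, h⟩ - v i ⟨t, h⟩))|
         else 0) := by
      intro i
      have htel := det_telescope (D.toMultilinearMap) (u i) (v i)
      have hcoe : ∀ (z : Fin n → EuclideanSpace ℝ (Fin n)),
          D.toMultilinearMap z = D z := fun z => rfl
      rw [hcoe, hcoe] at htel
      rw [htel]
      apply sum_le_sum
      intro t htr
      rw [mem_range] at htr
      rw [dif_pos htr, dif_pos htr]
      exact le_abs_self _
    calc ∑ i, (D (u i) - D (v i)) ≤ ∑ i : Fin k, ∑ t ∈ range n,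
        (if h : t < n then
          |D (Function.update (fun j : Fin n => if (j : ℕ) < t + 1 then v i j else u i j)
              ⟨t, h⟩ (u i ⟨t, h⟩ - v i ⟨t, h⟩))|
         else 0) := sum_le_sum fun i _ => habs i
      _ = ∑ t ∈ range n, ∑ i : Fin k,
        (if h : t < n then
          |D (Function.update (fun j : Fin n => if (j : ℕ) < t + 1 then v i j else u i j)
              ⟨t, h⟩ (u i ⟨t, h⟩ - v i ⟨t, h⟩))|
         else 0) := sum_comm
      _ ≤ ∑ _t ∈ range n, α * M ^ (n - 1) := by
          apply sum_le_sum
          intro t htr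
          rw [mem_range] at htr
          calc ∑ i : Fin k, (if h : t < n then
              |D (Function.update (fun j : Fin n => if (j : ℕ) < t + 1 then v i j else u i j)
                  ⟨t, h⟩ (u i ⟨t, h⟩ - v i ⟨t, h⟩))|
             else 0) = ∑ i : Fin k,
              |D (Function.update (fun j : Fin n => if (j : ℕ) < t + 1 then v i j else u i j)
                  ⟨t, htr⟩ (u i ⟨t, htr⟩ - v i ⟨t, htr⟩))| :=
                sum_congr rfl fun i _ => by rw [dif_pos htr]
            _ ≤ α * M ^ (n - 1) := key t htr
      _ = (n : ℝ) * (α * M ^ (n - 1)) := by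
          rw [sum_const, card_range, nsmul_eq_mul]
  -- arithmetic: n * (α * M^(n-1)) ≤ 2^n * ν * ‖L‖^n
  have harith : (n : ℝ) * (α * M ^ (n - 1)) ≤ 2 ^ n * ν * ‖L‖ ^ n := by
    have hgeo : (n : ℝ) ≤ (8 / 5) ^ n := nat_le_geo n
    have h54 : 1 + ν / Real.sqrt n ≤ 5 / 4 := by
      have : ν / Real.sqrt n ≤ ν := div_le_self hν.le hsn1
      linarith
    have hpow1 : (1 + ν / Real.sqrt n) ^ (n - 1) ≤ (5 / 4 : ℝ) ^ (n - 1) :=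
      pow_le_pow_left₀ (by positivity) h54 _
    have hpow2 : ((5 : ℝ) / 4) ^ (n - 1) ≤ (5 / 4 : ℝ) ^ n :=
      pow_le_pow_right₀ (by norm_num) (Nat.sub_le n 1)
    have hsqn : Real.sqrt n ≤ (n : ℝ) := by
      have h := Real.sqrt_le_sqrt (show (n:ℝ) ≤ (n:ℝ) ^ 2 by nlinarith)
      rwa [Real.sqrt_sq (by positivity : (0:ℝ) ≤ (n:ℝ))] at h
    have hLpow : ‖L‖ * ‖L‖ ^ (n - 1) = ‖L‖ ^ n := by
      rw [← pow_succ']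
      congr 1
      omega
    have hns : Real.sqrt n * Real.sqrt n = (n:ℝ) := Real.mul_self_sqrt (by positivity)
    have e1 : (n : ℝ) * (α * M ^ (n - 1))
        = Real.sqrt n * ν * ((1 + ν / Real.sqrt n) ^ (n - 1)) * ‖L‖ ^ n := by
      have h5 : ν / Real.sqrt n * Real.sqrt n = ν := div_mul_cancel₀ ν hsnpos.ne'
      rw [hα, hM, mul_pow, ← hLpow]
      linear_combination
        (-(ν / Real.sqrt n * (‖L‖ * ((1 + ν / Real.sqrt n) ^ (n - 1) * ‖L‖ ^ (n - 1))))) * hns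
        + (Real.sqrt n * (‖L‖ * ((1 + ν / Real.sqrt n) ^ (n - 1) * ‖L‖ ^ (n - 1)))) * h5
    rw [e1]
    calc Real.sqrt n * ν * ((1 + ν / Real.sqrt n) ^ (n - 1)) * ‖L‖ ^ n
      _ ≤ (n : ℝ) * ν * ((5 / 4 : ℝ) ^ n) * ‖L‖ ^ n := by
          apply mul_le_mul_of_nonneg_right _ (by positivity)
          have h1 : Real.sqrt n * ν ≤ (n : ℝ) * ν := mul_le_mul_of_nonneg_right hsqn hν.le
          apply mul_le_mul h1 (hpow1.trans hpow2) (by positivity) (by positivity)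
      _ ≤ ((8 / 5 : ℝ) ^ n) * ν * ((5 / 4 : ℝ) ^ n) * ‖L‖ ^ n := by
          apply mul_le_mul_of_nonneg_right _ (by positivity)
          apply mul_le_mul_of_nonneg_right _ (by positivity)
          exact mul_le_mul_of_nonneg_right hgeo hν.le
      _ = 2 ^ n * ν * ‖L‖ ^ n := by
          rw [show ((8:ℝ)/5) ^ n * ν * ((5:ℝ)/4) ^ n = ((8:ℝ)/5 * (5/4)) ^ n * ν by
            rw [mul_pow]; ring]
          norm_num
  -- conclude
  set S : ℝ := ∑ i, LinearMap.det
      ((Ri i : EuclideanSpace ℝ (Fin n) →ₗ[ℝ] EuclideanSpace ℝ (Fin n))) with hS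
  have hSsum : ‖L‖ ^ n - S ≤ 2 ^ n * ν * ‖L‖ ^ n := by
    have h1 : ‖L‖ ^ n - S = ∑ i, (D (u i) - D (v i)) := by
      rw [sum_sub_distrib, hS, ← hL]
      congr 1
      · exact sum_congr rfl fun i _ => hdetL i
      · exact sum_congr rfl fun i _ => hdetR i
    rw [h1]
    exact key2.trans harith
  have hc : (0:ℝ) < 1 - 2 ^ n * ν := by
    have h2 : (0:ℝ) < 2 ^ n := by positivity
    have h3 : (2:ℝ) ^ n * ν < 2 ^ n * (1 / 2 ^ n) := mul_lt_mul_of_pos_left hν' h2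
    have h4 : (2:ℝ) ^ n * (1 / 2 ^ n) = 1 := by field_simp
    linarith
  have hfinal1 : (1 - 2 ^ n * ν) * ‖L‖ ^ n ≤ S := by nlinarith
  have h1 : ‖R‖ ^ n ≤ (1 + ν) ^ n * ‖L‖ ^ n := by
    calc ‖R‖ ^ n ≤ ((1 + ν) * ‖L‖) ^ n := pow_le_pow_left₀ (norm_nonneg R) hR1 n
      _ = (1 + ν) ^ n * ‖L‖ ^ n := mul_pow _ _ _
  have h2 : (1 + ν) ^ n * ‖L‖ ^ n ≤ (1 + ν) ^ n / (1 - 2 ^ n * ν) * S := by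
    rw [div_mul_eq_mul_div, le_div_iff₀ hc]
    calc (1 + ν) ^ n * ‖L‖ ^ n * (1 - 2 ^ n * ν)
        = (1 + ν) ^ n * ((1 - 2 ^ n * ν) * ‖L‖ ^ n) := by ring
      _ ≤ (1 + ν) ^ n * S := by
          apply mul_le_mul_of_nonneg_left hfinal1 (by positivity)
  exact h1.trans h2
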